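/- Let G be a finite group, and x, y, z ∈ G with xyz = 1, ⟨x, y⟩ = G, and gcd(ord(x), ord(y)) = 1. Then the pairs (x,y), (y, y⁻¹xy) generate G × G; that is, the subgroup of G × G generated by (x, y) and (y, y⁻¹xy) is all of G × G. -/

import Mathlib

lemma aux_pow (K : Type*) [Group K] (a b : K)
    (hcop : Nat.Coprime (orderOf a) (orderOf b)) :
    ∃ n : ℕ, a ^ n = a ∧ b ^ n = 1 := by
  obtain ⟨n, h1, h2⟩ := Nat.chineseRemainder hcop 1 0
  refine ⟨n, ?_, ?_⟩
  · calc a ^ n = a ^ 1 := (pow_eq_pow_iff_modEq).mpr h1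
      _ = a := pow_one a
  · calc b ^ n = b ^ 0 := (pow_eq_pow_iff_modEq).mpr h2
      _ = 1 := pow_zero b

theorem stmt_0 (G : Type*) [Group G] [Finite G] (x y z : G)
    (hxyz : x * y * z = 1)
    (hgen : Subgroup.closure {x, y} = (⊤ : Subgroup G))
    (hcop : Nat.Coprime (orderOf x) (orderOf y)) :
    Subgroup.closure {((x, y) : G × G), (y, y⁻¹ * x * y)} = (⊤ : Subgroup (G × G)) := by
  set H : Subgroup (G × G) := Subgroup.closure {((x, y) : G × G), (y, y⁻¹ * x * y)} with hH
  have hxy : ((x, y) : G × G) ∈ H := Subgroup.subset_closure (by simp)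
  have hyx : ((y, y⁻¹ * x * y) : G × G) ∈ H := Subgroup.subset_closure (by simp)
  -- order of conjugate
  have hordc : orderOf (y⁻¹ * x * y) = orderOf x := by
    have hsc : SemiconjBy y⁻¹ x (y⁻¹ * x * y) := by
      show y⁻¹ * x = (y⁻¹ * x * y) * y⁻¹
      group
    exact (SemiconjBy.orderOf_eq y⁻¹ hsc).symm
  -- split elements
  obtain ⟨n, hn1, hn2⟩ := aux_pow G x y hcop
  obtain ⟨m, hm1, hm2⟩ := aux_pow G y (y⁻¹ * x * y) (by rw [hordc]; exact hcop.symm)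
  have hx1 : ((x, 1) : G × G) ∈ H := by
    have := H.pow_mem hxy n
    rwa [Prod.pow_mk, hn1, hn2] at this
  have h1y : ((1, y) : G × G) ∈ H := by
    have := H.mul_mem (H.inv_mem hx1) hxy
    simpa using this
  have hy1 : ((y, 1) : G × G) ∈ H := by
    have := H.pow_mem hyx m
    rwa [Prod.pow_mk, hm1, hm2] at this
  have h1c : ((1, y⁻¹ * x * y) : G × G) ∈ H := by
    have := H.mul_mem (H.inv_mem hy1) hyx
    simpa using this
  -- second coordinate generating set is also top
  have hgen2 : Subgroup.closure {y, y⁻¹ * x * y} = (⊤ : Subgroup G) := by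
    have hy : y ∈ Subgroup.closure {y, y⁻¹ * x * y} :=
      Subgroup.subset_closure (by simp)
    have hc : y⁻¹ * x * y ∈ Subgroup.closure {y, y⁻¹ * x * y} :=
      Subgroup.subset_closure (by simp)
    have hxmem : x ∈ Subgroup.closure {y, y⁻¹ * x * y} := by
      have := Subgroup.mul_mem _ (Subgroup.mul_mem _ hy hc) (Subgroup.inv_mem _ hy)
      have hx' : y * (y⁻¹ * x * y) * y⁻¹ = x := by group
      rwa [hx'] at this
    rw [eq_top_iff, ← hgen, Subgroup.closure_le]
    intro a ha
    simp only [Set.mem_insert_iff, Set.mem_singleton_iff] at ha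
    rcases ha with rfl | rfl
    · exact hxmem
    · exact hy
  -- left factor in H
  have hleft : ∀ a : G, ((a, 1) : G × G) ∈ H := by
    intro a
    have ha : a ∈ Subgroup.closure {x, y} := hgen ▸ Subgroup.mem_top a
    refine Subgroup.closure_induction (fun g hg => ?_) (by exact H.one_mem)
      (fun g h _ _ hg hh => by simpa using H.mul_mem hg hh)
      (fun g _ hg => by simpa using H.inv_mem hg) ha
    rcases hg with rfl | hg
    · exact hx1
    · simp only [Set.mem_singleton_iff] at hg; subst hg; exact hy1
  have hright : ∀ b : G, ((1, b) : G × G) ∈ H := by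
    intro b
    have hb : b ∈ Subgroup.closure {y, y⁻¹ * x * y} := hgen2 ▸ Subgroup.mem_top b
    refine Subgroup.closure_induction (fun g hg => ?_) (by exact H.one_mem)
      (fun g h _ _ hg hh => by simpa using H.mul_mem hg hh)
      (fun g _ hg => by simpa using H.inv_mem hg) hb
    rcases hg with rfl | hg
    · exact h1y
    · simp only [Set.mem_singleton_iff] at hg; subst hg; exact h1c
  rw [eq_top_iff]
  rintro ⟨a, b⟩ -
  have := H.mul_mem (hleft a) (hright b)
  simpa using this
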